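/- Let x* be a locally optimal solution of the problem (P) and suppose the function H is Fréchet differentiable at x*. Then for every v ∈ ∂h₀(x*), the point x* is a globally optimal solution of the convex program: minimize g₀(x) − h₀(x*) − ⟨v, x − x*⟩ subject to G(x) − H(x*) − DH(x*)(x − x*) ⪯_K 0 and x ∈ A. -/
import Mathlib


open scoped RealInnerProductSpace Pointwise

/-- A function with values in a space ordered by a cone `K` is `K`-convex if
`Φ(αx₁ + (1−α)x₂) ⪯_K αΦ(x₁) + (1−α)Φ(x₂)` for all `x₁, x₂` and `α ∈ [0,1]`. -/
def KConvex {X Y : Type*} [AddCommGroup X] [Module ℝ X] [AddCommGroup Y] [Module ℝ Y]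
    (K : Set Y) (Φ : X → Y) : Prop :=
  ∀ (x₁ x₂ : X) (α : ℝ), α ∈ Set.Icc (0 : ℝ) 1 →
    α • Φ x₁ + (1 - α) • Φ x₂ - Φ (α • x₁ + (1 - α) • x₂) ∈ K

/-- The subdifferential of a convex function `φ : ℝ^d → ℝ` at a point `x`. -/
def subdiff {d : ℕ} (φ : EuclideanSpace ℝ (Fin d) → ℝ) (x : EuclideanSpace ℝ (Fin d)) :
    Set (EuclideanSpace ℝ (Fin d)) :=
  {w | ∀ y, φ x + ⟪w, y - x⟫ ≤ φ y}

private lemma cone_add' {Y : Type*} [AddCommGroup Y] [Module ℝ Y] {K : Set Y}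
    (hKconvex : Convex ℝ K) (hKcone : ∀ c : ℝ, 0 ≤ c → ∀ y ∈ K, c • y ∈ K)
    {a b : Y} (ha : a ∈ K) (hb : b ∈ K) : a + b ∈ K := by
  have h := hKconvex ha hb (by norm_num : (0:ℝ) ≤ 1/2) (by norm_num : (0:ℝ) ≤ 1/2)
    (by norm_num)
  have h2 := hKcone 2 (by norm_num) _ h
  convert h2 using 1
  module

/-- The linearization of a `K`-convex Fréchet-differentiable function underestimates it. -/
private lemma lin_under {d : ℕ} {Y : Type*} [NormedAddCommGroup Y] [NormedSpace ℝ Y]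
    {K : Set Y} (hKclosed : IsClosed K)
    (hKcone : ∀ c : ℝ, 0 ≤ c → ∀ y ∈ K, c • y ∈ K)
    {H : EuclideanSpace ℝ (Fin d) → Y} (hH : KConvex K H)
    {xs : EuclideanSpace ℝ (Fin d)} {DH : EuclideanSpace ℝ (Fin d) →L[ℝ] Y}
    (hDH : HasFDerivAt H DH xs) (z : EuclideanSpace ℝ (Fin d)) :
    H z - H xs - DH (z - xs) ∈ K := by
  set u := z - xs with hu
  have hg : HasDerivAt (fun t : ℝ => xs + t • u) u 0 := by
    simpa using ((hasDerivAt_id (0:ℝ)).smul_const u).const_add xs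
  have hDH' : HasFDerivAt H DH ((fun t : ℝ => xs + t • u) 0) := by simpa using hDH
  have hcomp : HasDerivAt (fun t : ℝ => H (xs + t • u)) (DH u) 0 :=
    hDH'.comp_hasDerivAt 0 hg
  have hslope := hasDerivAt_iff_tendsto_slope.mp hcomp
  have hmono : nhdsWithin (0:ℝ) (Set.Ioi 0) ≤ nhdsWithin (0:ℝ) {(0:ℝ)}ᶜ :=
    nhdsWithin_mono 0 (fun a ha => ne_of_gt ha)
  have htends : Filter.Tendsto
      (fun α : ℝ => H z - H xs - slope (fun t : ℝ => H (xs + t • u)) 0 α)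
      (nhdsWithin 0 (Set.Ioi 0)) (nhds (H z - H xs - DH u)) :=
    tendsto_const_nhds.sub (hslope.mono_left hmono)
  have hev : ∀ᶠ α in nhdsWithin (0:ℝ) (Set.Ioi 0),
      H z - H xs - slope (fun t : ℝ => H (xs + t • u)) 0 α ∈ K := by
    filter_upwards [Ioo_mem_nhdsGT_of_mem (Set.mem_Ico.mpr ⟨le_rfl, one_pos⟩)] with α hα
    have hα0 : (0:ℝ) < α := hα.1
    have hne : α ≠ 0 := hα0.ne'
    have hk := hH z xs α ⟨hα0.le, hα.2.le⟩
    have harg : α • z + (1 - α) • xs = xs + α • u := by rw [hu]; module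
    rw [harg] at hk
    have hk2 := hKcone α⁻¹ (by positivity) _ hk
    convert hk2 using 1
    simp only [slope, vsub_eq_sub, sub_zero, zero_smul, add_zero]
    match_scalars <;> field_simp <;> ring
  exact hKclosed.mem_of_tendsto htends hev

theorem stmt_10 {d : ℕ} {Y : Type*}
    [NormedAddCommGroup Y] [NormedSpace ℝ Y] [CompleteSpace Y]
    (K : Set Y) (hKclosed : IsClosed K) (hKconvex : Convex ℝ K)
    (hKcone : ∀ c : ℝ, 0 ≤ c → ∀ y ∈ K, c • y ∈ K)
    (hKpointed : K ∩ (-K) = {0})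
    (g₀ h₀ : EuclideanSpace ℝ (Fin d) → ℝ)
    (hg₀ : ConvexOn ℝ Set.univ g₀) (hh₀ : ConvexOn ℝ Set.univ h₀)
    (G H : EuclideanSpace ℝ (Fin d) → Y)
    (hG : KConvex K G) (hH : KConvex K H)
    (A : Set (EuclideanSpace ℝ (Fin d))) (hAclosed : IsClosed A) (hAconvex : Convex ℝ A)
    (xs : EuclideanSpace ℝ (Fin d))
    (DH : EuclideanSpace ℝ (Fin d) →L[ℝ] Y) (hDH : HasFDerivAt H DH xs)
    (hxsfeas : xs ∈ A ∧ -(G xs - H xs) ∈ K)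
    (hlocopt : ∃ U ∈ nhds xs, ∀ x ∈ U, x ∈ A → -(G x - H x) ∈ K →
      g₀ xs - h₀ xs ≤ g₀ x - h₀ x) :
    ∀ v ∈ subdiff h₀ xs,
      (xs ∈ A ∧ -(G xs - H xs - DH (xs - xs)) ∈ K) ∧
      ∀ x, x ∈ A → -(G x - H xs - DH (x - xs)) ∈ K →
        g₀ xs - h₀ xs - ⟪v, xs - xs⟫ ≤ g₀ x - h₀ xs - ⟪v, x - xs⟫ := by
  intro v hv
  simp only [subdiff, Set.mem_setOf_eq] at hv
  obtain ⟨U, hU, hopt⟩ := hlocopt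
  refine ⟨⟨hxsfeas.1, by simpa using hxsfeas.2⟩, ?_⟩
  intro x hxA hxfeas
  -- find a small α ∈ (0,1) with α•x + (1-α)•xs ∈ U
  have hcont : Filter.Tendsto (fun α : ℝ => α • x + (1 - α) • xs) (nhds 0) (nhds xs) := by
    have hc : Continuous fun α : ℝ => α • x + (1 - α) • xs := by continuity
    have h0 : (fun α : ℝ => α • x + (1 - α) • xs) 0 = xs := by simp
    simpa [h0] using hc.tendsto 0
  have hevU : ∀ᶠ α : ℝ in nhdsWithin 0 (Set.Ioi 0), α • x + (1 - α) • xs ∈ U :=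
    (hcont.eventually hU).filter_mono nhdsWithin_le_nhds
  have hIoo : ∀ᶠ α : ℝ in nhdsWithin 0 (Set.Ioi 0), α ∈ Set.Ioo (0:ℝ) 1 :=
    Ioo_mem_nhdsGT_of_mem (Set.mem_Ico.mpr ⟨le_rfl, one_pos⟩)
  obtain ⟨α, hαU, hαI⟩ := (hevU.and hIoo).exists
  have hα0 : (0:ℝ) < α := hαI.1
  have hα1 : α < 1 := hαI.2
  -- feasibility of xα for the original problem
  have ha : α • G x + (1 - α) • G xs - G (α • x + (1 - α) • xs) ∈ K :=
    hG x xs α ⟨hα0.le, hα1.le⟩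
  have hb : H (α • x + (1 - α) • xs) - H xs - DH ((α • x + (1 - α) • xs) - xs) ∈ K :=
    lin_under hKclosed hKcone hH hDH _
  have hc : α • -(G x - H xs - DH (x - xs)) ∈ K := hKcone α hα0.le _ hxfeas
  have he : (1 - α) • -(G xs - H xs) ∈ K := hKcone (1 - α) (by linarith) _ hxsfeas.2
  have hsum := cone_add' hKconvex hKcone
    (cone_add' hKconvex hKcone (cone_add' hKconvex hKcone ha hb) hc) he
  have hxd : (α • x + (1 - α) • xs) - xs = α • (x - xs) := by module
  have hfeas : -(G (α • x + (1 - α) • xs) - H (α • x + (1 - α) • xs)) ∈ K := by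
    convert hsum using 1
    rw [hxd, map_smul]
    module
  have hxαA : (α • x + (1 - α) • xs) ∈ A :=
    hAconvex hxA hxsfeas.1 hα0.le (by linarith) (by ring)
  have hkey : g₀ xs - h₀ xs ≤ g₀ (α • x + (1 - α) • xs) - h₀ (α • x + (1 - α) • xs) :=
    hopt _ hαU hxαA hfeas
  have hgx : g₀ (α • x + (1 - α) • xs) ≤ α * g₀ x + (1 - α) * g₀ xs :=
    hg₀.2 (Set.mem_univ x) (Set.mem_univ xs) hα0.le (by linarith) (by ring)
  have hhx : h₀ xs + α * ⟪v, x - xs⟫ ≤ h₀ (α • x + (1 - α) • xs) := by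
    have h := hv (α • x + (1 - α) • xs)
    rw [hxd, real_inner_smul_right] at h
    linarith
  have h1 : α * g₀ xs ≤ α * (g₀ x - ⟪v, x - xs⟫) := by nlinarith
  have h2 : g₀ xs ≤ g₀ x - ⟪v, x - xs⟫ := le_of_mul_le_mul_left h1 hα0
  have h3 : ⟪v, xs - xs⟫ = (0:ℝ) := by simp
  linarith
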